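/- Let k ≥ 2 and N > k, and let A be the (N − ⌊k⌋) × (N − ⌊k⌋) complex tridiagonal matrix with diagonal entries 2(⌊k⌋+m)/(ik) for m = 1, …, N−⌊k⌋ (last diagonal entry 2(N−1)/(ik)), superdiagonal entries 1, and subdiagonal entries −1. Then A is invertible and ‖A^{−1}‖_∞ < (k+2)/2, where ‖·‖_∞ is the operator norm induced by the max norm. -/

import Mathlib

set_option maxHeartbeats 1000000


open Complex

/-- The tridiagonal matrix A of size N − ⌊k⌋ with diagonal entries 2(⌊k⌋+m)/(ik),
superdiagonal 1 and subdiagonal −1 is invertible, and every row sum of the moduli of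
the entries of A⁻¹ is < (k+2)/2; i.e. ‖A⁻¹‖_∞ < (k+2)/2 for the max-norm induced
operator norm. -/
theorem tridiagonal_inverse_bound (k : ℝ) (hk : 2 ≤ k) (N : ℕ) (hN : (k : ℝ) < N) :
    ∀ A : Matrix (Fin (N - (⌊k⌋).toNat)) (Fin (N - (⌊k⌋).toNat)) ℂ,
      (∀ i j, A i j =
        if (i : ℕ) = (j : ℕ) then
          2 * (((⌊k⌋ : ℤ) : ℂ) + (i : ℕ) + 1) / (Complex.I * (k : ℂ))
        else if (j : ℕ) = (i : ℕ) + 1 then 1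
        else if (i : ℕ) = (j : ℕ) + 1 then -1
        else 0) →
      IsUnit A ∧ ∀ i, ∑ j, ‖A⁻¹ i j‖ < (k + 2) / 2 := by
  -- basic real facts
  set F : ℝ := ((⌊k⌋ : ℤ) : ℝ) with hF
  have hk0 : (0:ℝ) < k := by linarith
  have hF2 : (2:ℝ) ≤ F := by
    have h2 : (2:ℤ) ≤ ⌊k⌋ := Int.le_floor.mpr (by exact_mod_cast hk)
    rw [hF]; exact_mod_cast h2
  have hFk : F ≤ k := Int.floor_le k
  have hkF : k < F + 1 := Int.lt_floor_add_one k
  have hfloor_nonneg : (0:ℤ) ≤ ⌊k⌋ := by positivity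
  have htoNat : ((⌊k⌋).toNat : ℝ) = F := by
    rw [hF]; exact_mod_cast congrArg (Int.cast : ℤ → ℝ) (Int.toNat_of_nonneg hfloor_nonneg)
  -- dimension is positive
  set n' : ℕ := N - (⌊k⌋).toNat with hn'
  have hlt : (⌊k⌋).toNat < N := by
    have : ((⌊k⌋).toNat : ℝ) < (N : ℝ) := by rw [htoNat]; linarith
    exact_mod_cast this
  have hnpos : 0 < n' := Nat.sub_pos_of_lt hlt
  haveI : Nonempty (Fin n') := ⟨⟨0, hnpos⟩⟩
  -- instances for the l∞ operator norm
  letI : NormedRing (Matrix (Fin n') (Fin n') ℂ) := Matrix.linftyOpNormedRing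
  letI : NormedSpace ℂ (Matrix (Fin n') (Fin n') ℂ) := Matrix.linftyOpNormedSpace
  haveI : CompleteSpace (Matrix (Fin n') (Fin n') ℂ) := FiniteDimensional.complete ℂ _
  intro A hA
  -- diagonal entries
  set d : Fin n' → ℂ := fun i => 2 * (((⌊k⌋ : ℤ) : ℂ) + (i : ℕ) + 1) / (Complex.I * (k : ℂ))
    with hd
  have habs : ∀ j : Fin n', ‖d j‖ = 2 * (F + (j:ℕ) + 1) / k := by
    intro j
    have hcast : (((⌊k⌋ : ℤ) : ℂ) + (j : ℕ) + 1) = ((F + (j:ℕ) + 1 : ℝ) : ℂ) := by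
      rw [hF]; push_cast; ring
    have hpos : (0:ℝ) < F + (j:ℕ) + 1 := by
      have : (0:ℝ) ≤ ((j:ℕ):ℝ) := Nat.cast_nonneg _
      linarith
    rw [hd]
    simp only [hcast, norm_div, norm_mul, Complex.norm_real, Real.norm_eq_abs, Complex.norm_I, Complex.norm_two,
      one_mul, abs_of_pos hpos, abs_of_pos hk0]
  have hd0 : ∀ j : Fin n', d j ≠ 0 := by
    intro j h
    have := habs j
    rw [h, norm_zero] at this
    have h0 : (0:ℝ) ≤ ((j:ℕ):ℝ) := Nat.cast_nonneg _
    have hpos : (0:ℝ) < 2 * (F + (j:ℕ) + 1) / k := by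
      apply div_pos (by linarith) hk0
    linarith
  -- the diagonal part and the perturbation
  set D : Matrix (Fin n') (Fin n') ℂ := Matrix.diagonal d with hD
  set K : Matrix (Fin n') (Fin n') ℂ := Matrix.of fun i j => (A i j - D i j) * (d j)⁻¹ with hK
  have hAD : A = (1 + K) * D := by
    ext i j
    rw [add_mul, one_mul, Matrix.add_apply, Matrix.mul_diagonal, hK]
    simp only [Matrix.of_apply]
    rw [mul_assoc, inv_mul_cancel₀ (hd0 j), mul_one]
    ring
  -- helper: row sums bound the norm and vice versa
  have norm_le_of_rows : ∀ (M : Matrix (Fin n') (Fin n') ℂ) (c : ℝ), 0 ≤ c →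
      (∀ i, ∑ j, ‖M i j‖ ≤ c) → ‖M‖ ≤ c := by
    intro M c hc h
    rw [Matrix.linfty_opNorm_def]
    have : (Finset.univ.sup fun i => ∑ j, ‖M i j‖₊) ≤ ⟨c, hc⟩ := by
      apply Finset.sup_le
      intro i _
      refine NNReal.coe_le_coe.1 ?_
      rw [NNReal.coe_sum]
      simp only [coe_nnnorm]
      exact h i
    exact_mod_cast this
  have row_le_norm : ∀ (M : Matrix (Fin n') (Fin n') ℂ) (i : Fin n'),
      ∑ j, ‖M i j‖ ≤ ‖M‖ := by
    intro M i
    rw [Matrix.linfty_opNorm_def]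
    have h1 : (∑ j, ‖M i j‖₊) ≤ Finset.univ.sup (fun i => ∑ j, ‖M i j‖₊) :=
      Finset.le_sup (f := fun i => ∑ j, ‖M i j‖₊) (Finset.mem_univ i)
    have h2 := NNReal.coe_le_coe.2 h1
    rw [NNReal.coe_sum] at h2
    simpa using h2
  -- entrywise bound for K
  have habsinv : ∀ j : Fin n', ‖(d j)⁻¹‖ = k / (2 * (F + (j:ℕ) + 1)) := by
    intro j
    rw [norm_inv, habs j, inv_div]
  have hKentry : ∀ i j : Fin n', ‖K i j‖ ≤
      (if (j:ℕ) = (i:ℕ) + 1 then k / (2*(F + (i:ℕ) + 2)) else 0) +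
      (if (i:ℕ) = (j:ℕ) + 1 then k / (2*(F + (i:ℕ))) else 0) := by
    intro i j
    rw [hK]
    simp only [Matrix.of_apply, hA i j, hD, Matrix.diagonal_apply]
    by_cases h1 : (i:ℕ) = (j:ℕ)
    · have hij : i = j := Fin.ext h1
      subst hij
      rw [if_pos rfl, if_pos rfl, if_neg (by omega), if_neg (by omega)]
      simp [hd]
    · have hij : ¬ i = j := fun h => h1 (congrArg _ h)
      rw [if_neg h1, if_neg hij]
      by_cases h2 : (j:ℕ) = (i:ℕ) + 1
      · rw [if_pos h2, if_pos h2, if_neg (by omega)]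
        have hcast : ((j:ℕ) : ℝ) = (i:ℕ) + 1 := by exact_mod_cast h2
        rw [sub_zero, one_mul, habsinv j, hcast, add_zero]
        apply le_of_eq
        ring_nf
      · rw [if_neg h2, if_neg h2]
        by_cases h3 : (i:ℕ) = (j:ℕ) + 1
        · rw [if_pos h3, if_pos h3]
          have hcast : ((i:ℕ) : ℝ) = (j:ℕ) + 1 := by exact_mod_cast h3
          rw [sub_zero, neg_one_mul, norm_neg, habsinv j, hcast, zero_add]
          apply le_of_eq
          ring_nf
        · rw [if_neg h3, if_neg h3]
          simp
  -- sum of an indicator is at most the constant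
  have sum_ind_le : ∀ (m : ℕ) (c : ℝ), 0 ≤ c →
      (∑ j : Fin n', if (j:ℕ) = m then c else 0) ≤ c := by
    intro m c hc
    by_cases hm : m < n'
    · rw [Finset.sum_eq_single (⟨m, hm⟩ : Fin n')]
      · simp
      · intro j _ hj
        rw [if_neg]
        intro h
        exact hj (Fin.ext h)
      · intro h
        exact absurd (Finset.mem_univ _) h
    · calc (∑ j : Fin n', if (j:ℕ) = m then c else 0) = 0 := by
            apply Finset.sum_eq_zero
            intro j _
            rw [if_neg]
            have := j.isLt
            omega
        _ ≤ c := hc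
  -- row sums of K are at most B
  set B : ℝ := k/(2*(F+1)) + k/(2*(F+3)) with hB
  have hrowK : ∀ i : Fin n', ∑ j, ‖K i j‖ ≤ B := by
    intro i
    have hipos : (0:ℝ) ≤ ((i:ℕ):ℝ) := Nat.cast_nonneg _
    refine (Finset.sum_le_sum fun j _ => hKentry i j).trans ?_
    rw [Finset.sum_add_distrib]
    have hc1 : (0:ℝ) ≤ k / (2*(F + (i:ℕ) + 2)) := le_of_lt (div_pos hk0 (by linarith))
    have h1 := sum_ind_le ((i:ℕ)+1) _ hc1
    by_cases hi : (i:ℕ) = 0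
    · have h2 : (∑ j : Fin n', if (i:ℕ) = (j:ℕ)+1 then k/(2*(F+(i:ℕ))) else 0) = 0 := by
        apply Finset.sum_eq_zero
        intro j _
        rw [if_neg (by omega)]
      rw [h2, add_zero]
      refine h1.trans ?_
      have hm : k/(2*(F+(i:ℕ)+2)) ≤ k/(2*(F+1)) :=
        div_le_div_of_nonneg_left (le_of_lt hk0) (by linarith) (by linarith)
      have hb : (0:ℝ) ≤ k/(2*(F+3)) := le_of_lt (div_pos hk0 (by linarith))
      rw [hB]; linarith
    · have hi1 : (1:ℝ) ≤ ((i:ℕ):ℝ) := by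
        have h1' : 1 ≤ (i:ℕ) := Nat.one_le_iff_ne_zero.mpr hi
        exact_mod_cast h1'
      have hc2 : (0:ℝ) ≤ k/(2*(F+(i:ℕ))) := le_of_lt (div_pos hk0 (by linarith))
      have hcond : ∀ j : Fin n', ((i:ℕ) = (j:ℕ)+1) = ((j:ℕ) = (i:ℕ)-1) := by
        intro j; exact propext (by omega)
      simp_rw [hcond]
      have h2 := sum_ind_le ((i:ℕ)-1) _ hc2
      have m1 : k/(2*(F+(i:ℕ)+2)) ≤ k/(2*(F+3)) :=
        div_le_div_of_nonneg_left (le_of_lt hk0) (by linarith) (by linarith)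
      have m2 : k/(2*(F+(i:ℕ))) ≤ k/(2*(F+1)) :=
        div_le_div_of_nonneg_left (le_of_lt hk0) (by linarith) (by linarith)
      rw [hB]; linarith
  -- B < 1 and the norm of K
  have hBpos : 0 ≤ B := by
    rw [hB]
    have hb1 : (0:ℝ) ≤ k/(2*(F+1)) := le_of_lt (div_pos hk0 (by linarith))
    have hb2 : (0:ℝ) ≤ k/(2*(F+3)) := le_of_lt (div_pos hk0 (by linarith))
    linarith
  have hB1 : B < 1 := by
    rw [hB]
    have h1 : k/(2*(F+1)) < 1/2 := by
      rw [div_lt_div_iff₀ (by linarith) (by norm_num)]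
      linarith
    have h2 : k/(2*(F+3)) < 1/2 := by
      rw [div_lt_div_iff₀ (by linarith) (by norm_num)]
      linarith
    linarith
  have hKnorm : ‖K‖ ≤ B := norm_le_of_rows K B hBpos hrowK
  have hKlt1 : ‖(-K)‖ < 1 := by rw [norm_neg]; exact lt_of_le_of_lt hKnorm hB1
  -- units
  have hPunit : IsUnit (1 + K) := by
    have h := isUnit_one_sub_of_norm_lt_one hKlt1
    rwa [sub_neg_eq_add] at h
  have hDunit : IsUnit D := by
    rw [Matrix.isUnit_iff_isUnit_det, hD, Matrix.det_diagonal, isUnit_iff_ne_zero]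
    exact Finset.prod_ne_zero_iff.mpr fun j _ => hd0 j
  have hAunit : IsUnit A := by rw [hAD]; exact hPunit.mul hDunit
  refine ⟨hAunit, ?_⟩
  -- inverse factorization
  have hAinv : A⁻¹ = D⁻¹ * (1 + K)⁻¹ := by rw [hAD, Matrix.mul_inv_rev]
  -- norm of D⁻¹
  have hDinv : D⁻¹ = Matrix.diagonal fun j => (d j)⁻¹ := by
    apply Matrix.inv_eq_right_inv
    rw [hD, Matrix.diagonal_mul_diagonal]
    have : (fun j => d j * (d j)⁻¹) = fun _ : Fin n' => (1:ℂ) :=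
      funext fun j => mul_inv_cancel₀ (hd0 j)
    rw [this, Matrix.diagonal_one]
  set nD : ℝ := k/(2*(F+1)) with hnD
  have hnDpos : 0 ≤ nD := by
    rw [hnD]; exact le_of_lt (div_pos hk0 (by linarith))
  have hDinvnorm : ‖D⁻¹‖ ≤ nD := by
    rw [hDinv, Matrix.linfty_opNorm_diagonal]
    rw [pi_norm_le_iff_of_nonneg hnDpos]
    intro j
    have hjpos : (0:ℝ) ≤ ((j:ℕ):ℝ) := Nat.cast_nonneg _
    rw [habsinv j, hnD]
    exact div_le_div_of_nonneg_left (le_of_lt hk0) (by linarith) (by linarith)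
  -- norm of (1+K)⁻¹ via geometric series
  have hPinv : (1 + K)⁻¹ = ∑' (m : ℕ), (-K) ^ m := by
    rw [Matrix.nonsing_inv_eq_ringInverse]
    have h := NormedRing.inverse_one_sub (-K) hKlt1
    rw [sub_neg_eq_add] at h
    rw [h]
    rfl
  have hPinvnorm : ‖(1 + K)⁻¹‖ ≤ (1 - B)⁻¹ := by
    rw [hPinv]
    have h := tsum_geometric_le_of_norm_lt_one (-K) hKlt1
    rw [norm_one] at h
    have h2 : (1 - ‖(-K)‖)⁻¹ ≤ (1 - B)⁻¹ := by
      apply inv_anti₀ (by linarith)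
      rw [norm_neg]
      linarith
    calc ‖∑' (m : ℕ), (-K) ^ m‖ ≤ 1 - 1 + (1 - ‖(-K)‖)⁻¹ := h
      _ = (1 - ‖(-K)‖)⁻¹ := by ring
      _ ≤ (1 - B)⁻¹ := h2
  -- the key numeric inequality
  have hkey : nD * (1 - B)⁻¹ < (k + 2) / 2 := by
    have hden : (0:ℝ) < 1 - B := by linarith
    rw [mul_inv_lt_iff₀' hden, hnD, hB]
    have e1 : (0:ℝ) < F + 1 := by linarith
    have e3 : (0:ℝ) < F + 3 := by linarith
    rw [div_lt_iff₀ (by linarith : (0:ℝ) < 2*(F+1))]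
    have expand : (1 - (k / (2 * (F + 1)) + k / (2 * (F + 3)))) * ((k + 2) / 2) * (2 * (F + 1))
        = (k+2)*(F+1) - k*(k+2)/2 - k*(k+2)*(F+1)/(2*(F+3)) := by
      field_simp
      ring
    rw [expand]
    have hq : k*(k+2)*(F+1)/(2*(F+3)) < ((k+2)*(F+1) - k*(k+2)/2 - k) := by
      rw [div_lt_iff₀ (by linarith : (0:ℝ) < 2*(F+3))]
      have p1 : (0:ℝ) ≤ (k - F) * (F + 1 - k) := mul_nonneg (by linarith) (by linarith)
      have p2 : (0:ℝ) < (F + 1 - k) * (F^2 + 4*F + 6) :=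
        mul_pos (by linarith) (by nlinarith)
      have p3 : (0:ℝ) ≤ (F + 2) * ((k - F) * (F + 1 - k)) := mul_nonneg (by linarith) p1
      nlinarith [p2, p3]
    linarith
  -- put everything together
  intro i
  calc ∑ j, ‖A⁻¹ i j‖ ≤ ‖A⁻¹‖ := row_le_norm A⁻¹ i
    _ = ‖D⁻¹ * (1 + K)⁻¹‖ := by rw [hAinv]
    _ ≤ ‖D⁻¹‖ * ‖(1 + K)⁻¹‖ := norm_mul_le _ _
    _ ≤ nD * (1 - B)⁻¹ := by
        apply mul_le_mul hDinvnorm hPinvnorm (norm_nonneg _) hnDpos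
    _ < (k + 2) / 2 := hkey
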